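/- Under the hypotheses of the previous statement (α_n = 1 - 2/(n+2), γ_n = (n+2)/(n+1), x_{n+1} = (1-α_n)u + α_n T_n(x_n), M ≥ max{d(x,p), d(u,p)}, and the condition d(T_n y, T_m y) ≤ (|γ_n - γ_m|/γ_n)·d(y, T_n y)), for all m, n: d(x_n, T_n(x_n)) ≤ 10M/(n+2) and d(x_n, T_m(x_n)) ≤ 20M/(n+2). -/

import Mathlib

theorem stmt17 {X : Type*} [MetricSpace X] (W : X → X → ℝ → X)
    (W1 : ∀ (x y z : X), ∀ l ∈ Set.Icc (0:ℝ) 1,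
      dist z (W x y l) ≤ (1 - l) * dist z x + l * dist z y)
    (W2 : ∀ (x y : X), ∀ l ∈ Set.Icc (0:ℝ) 1, ∀ m ∈ Set.Icc (0:ℝ) 1,
      dist (W x y l) (W x y m) = |l - m| * dist x y)
    (W3 : ∀ (x y : X), ∀ l ∈ Set.Icc (0:ℝ) 1, W x y l = W y x (1 - l))
    (W4 : ∀ (x y z w : X), ∀ l ∈ Set.Icc (0:ℝ) 1,
      dist (W x z l) (W y w l) ≤ (1 - l) * dist x y + l * dist z w)
    (T : ℕ → X → X)
    (hT : ∀ n, ∀ (x y : X), dist (T n x) (T n y) ≤ dist x y)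
    (p : X) (hfix : ∀ n, T n p = p)
    (u x₀ : X) (α : ℕ → ℝ)
    (x : ℕ → X) (hx0 : x 0 = x₀)
    (hxrec : ∀ n, x (n + 1) = W u (T n (x n)) (α n))
    (hα : ∀ n, α n = 1 - 2 / (n + 2))
    (γ : ℕ → ℝ) (hγ : ∀ n, γ n = (n + 2) / (n + 1))
    (hC1 : ∀ (y : X) (n m : ℕ), dist (T n y) (T m y) ≤ (|γ n - γ m| / γ n) * dist y (T n y))
    (M : ℝ) (hM : 0 < M) (hM1 : dist x₀ p ≤ M) (hM2 : dist u p ≤ M) :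
    ∀ m n, dist (x n) (T n (x n)) ≤ 10 * M / (n + 2) ∧
      dist (x n) (T m (x n)) ≤ 20 * M / (n + 2) := by
  have hpos2 : ∀ n : ℕ, (0:ℝ) < (n:ℝ) + 2 := fun n => by positivity
  have hα01 : ∀ n : ℕ, α n ∈ Set.Icc (0:ℝ) 1 := by
    intro n
    rw [hα n]
    constructor
    · have h1 : 2 / ((n:ℝ) + 2) ≤ 1 := by
        rw [div_le_one (hpos2 n)]
        have : (0:ℝ) ≤ (n:ℝ) := Nat.cast_nonneg n
        linarith
      linarith
    · have h1 : 0 ≤ 2 / ((n:ℝ) + 2) := by positivity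
      linarith
  have h1α : ∀ n : ℕ, 1 - α n = 2 / ((n:ℝ) + 2) := by
    intro n; rw [hα n]; ring
  have hTp : ∀ n y, dist (T n y) p ≤ dist y p := by
    intro n y
    have := hT n y p
    rwa [hfix n] at this
  have hxp : ∀ n, dist (x n) p ≤ M := by
    intro n
    induction n with
    | zero => rw [hx0]; exact hM1
    | succ n ih =>
      rw [hxrec n, dist_comm]
      have h1 := (hα01 n).1
      have h2 := (hα01 n).2
      have hTn : dist p (T n (x n)) ≤ M := by
        rw [dist_comm]; exact le_trans (hTp n (x n)) ih
      have hup : dist p u ≤ M := by rw [dist_comm]; exact hM2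
      calc dist p (W u (T n (x n)) (α n))
          ≤ (1 - α n) * dist p u + α n * dist p (T n (x n)) :=
            W1 u (T n (x n)) p (α n) (hα01 n)
        _ ≤ (1 - α n) * M + α n * M := by
            have e1 : (1 - α n) * dist p u ≤ (1 - α n) * M :=
              mul_le_mul_of_nonneg_left hup (by linarith)
            have e2 : α n * dist p (T n (x n)) ≤ α n * M :=
              mul_le_mul_of_nonneg_left hTn h1
            linarith
        _ = M := by ring
  have hd2 : ∀ n m, dist (x n) (T m (x n)) ≤ 2 * M := by
    intro n m
    calc dist (x n) (T m (x n)) ≤ dist (x n) p + dist p (T m (x n)) := dist_triangle _ _ _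
      _ ≤ M + M := by
          refine add_le_add (hxp n) ?_
          rw [dist_comm]
          exact le_trans (hTp m (x n)) (hxp n)
      _ = 2 * M := by ring
  have hua : ∀ n, dist (T n (x n)) u ≤ 2 * M := by
    intro n
    calc dist (T n (x n)) u ≤ dist (T n (x n)) p + dist p u := dist_triangle _ _ _
      _ ≤ M + M := add_le_add (le_trans (hTp n (x n)) (hxp n))
          (by rw [dist_comm]; exact hM2)
      _ = 2 * M := by ring
  have hB : ∀ n, dist (x (n + 1)) (T n (x n)) ≤ 4 * M / ((n:ℝ) + 2) := by
    intro n
    rw [hxrec n, dist_comm]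
    calc dist (T n (x n)) (W u (T n (x n)) (α n))
        ≤ (1 - α n) * dist (T n (x n)) u + α n * dist (T n (x n)) (T n (x n)) :=
          W1 u (T n (x n)) (T n (x n)) (α n) (hα01 n)
      _ = (2 / ((n:ℝ) + 2)) * dist (T n (x n)) u := by rw [dist_self, h1α n]; ring
      _ ≤ (2 / ((n:ℝ) + 2)) * (2 * M) :=
          mul_le_mul_of_nonneg_left (hua n) (by positivity)
      _ = 4 * M / ((n:ℝ) + 2) := by ring
  have hγ1 : ∀ n : ℕ, (1:ℝ) ≤ γ n := by
    intro n
    rw [hγ n, le_div_iff₀ (by positivity)]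
    have : (0:ℝ) ≤ (n:ℝ) := Nat.cast_nonneg n
    linarith
  have hγ2 : ∀ n : ℕ, γ n ≤ 2 := by
    intro n
    rw [hγ n, div_le_iff₀ (by positivity)]
    have : (0:ℝ) ≤ (n:ℝ) := Nat.cast_nonneg n
    linarith
  have hratio : ∀ n : ℕ, |γ n - γ (n + 1)| / γ n = 1 / (((n:ℝ) + 2) ^ 2) := by
    intro n
    have e1 : γ n - γ (n + 1) = 1 / (((n:ℝ) + 1) * ((n:ℝ) + 2)) := by
      rw [hγ n, hγ (n + 1)]
      push_cast
      field_simp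
      ring
    rw [e1, abs_of_nonneg (by positivity), hγ n]
    field_simp
  have hTT : ∀ n (y : X), dist (T n y) (T (n + 1) y) ≤ (1 / (((n:ℝ) + 2) ^ 2)) * dist y (T n y) := by
    intro n y
    have h := hC1 y n (n + 1)
    rwa [hratio n] at h
  have hWzero : ∀ (y : X), W u y 0 = u := by
    intro y
    have h := W1 u y u 0 (by constructor <;> norm_num)
    simp at h
    exact h.symm
  have hC : ∀ n, dist (x n) (x (n + 1)) ≤ 6 * M / ((n:ℝ) + 2) := by
    intro n
    induction n with
    | zero =>
      have hα0 : α 0 = 0 := by rw [hα 0]; norm_num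
      rw [hxrec 0, hα0, hWzero, hx0]
      have : dist x₀ u ≤ 2 * M := by
        calc dist x₀ u ≤ dist x₀ p + dist p u := dist_triangle _ _ _
          _ ≤ M + M := add_le_add hM1 (by rw [dist_comm]; exact hM2)
          _ = 2 * M := by ring
      have h0 : ((0:ℕ):ℝ) + 2 = 2 := by norm_num
      rw [h0]
      linarith
    | succ n ih =>
      have hαd : |α n - α (n + 1)| = 2 / (((n:ℝ) + 2) * ((n:ℝ) + 3)) := by
        have e : α (n + 1) - α n = 2 / (((n:ℝ) + 2) * ((n:ℝ) + 3)) := by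
          rw [hα n, hα (n + 1)]
          push_cast
          field_simp
          ring
        rw [abs_sub_comm, e, abs_of_nonneg (by positivity)]
      have hαn1 : α (n + 1) = ((n:ℝ) + 1) / ((n:ℝ) + 3) := by
        rw [hα (n + 1)]
        push_cast
        field_simp
        ring
      have term1 : dist (x (n + 1)) (W u (T n (x n)) (α (n + 1))) ≤
          (2 / (((n:ℝ) + 2) * ((n:ℝ) + 3))) * (2 * M) := by
        rw [hxrec n]
        have h := W2 u (T n (x n)) (α n) (hα01 n) (α (n + 1)) (hα01 (n + 1))
        rw [h, hαd]
        apply mul_le_mul_of_nonneg_left _ (by positivity)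
        rw [dist_comm]
        exact hua n
      have hab : dist (T n (x n)) (T (n + 1) (x (n + 1))) ≤
          6 * M / ((n:ℝ) + 2) + (1 / (((n:ℝ) + 2) ^ 2)) * (2 * M) := by
        calc dist (T n (x n)) (T (n + 1) (x (n + 1)))
            ≤ dist (T n (x n)) (T n (x (n + 1))) + dist (T n (x (n + 1))) (T (n + 1) (x (n + 1))) :=
              dist_triangle _ _ _
          _ ≤ dist (x n) (x (n + 1)) + (1 / (((n:ℝ) + 2) ^ 2)) * dist (x (n + 1)) (T n (x (n + 1))) := by
              exact add_le_add (hT n _ _) (hTT n (x (n + 1)))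
          _ ≤ 6 * M / ((n:ℝ) + 2) + (1 / (((n:ℝ) + 2) ^ 2)) * (2 * M) := by
              refine add_le_add ih ?_
              exact mul_le_mul_of_nonneg_left (hd2 (n + 1) n) (by positivity)
      have term2 : dist (W u (T n (x n)) (α (n + 1))) (x (n + 2)) ≤
          (((n:ℝ) + 1) / ((n:ℝ) + 3)) * (6 * M / ((n:ℝ) + 2) + (1 / (((n:ℝ) + 2) ^ 2)) * (2 * M)) := by
        rw [hxrec (n + 1)]
        calc dist (W u (T n (x n)) (α (n + 1))) (W u (T (n + 1) (x (n + 1))) (α (n + 1)))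
            ≤ (1 - α (n + 1)) * dist u u + α (n + 1) * dist (T n (x n)) (T (n + 1) (x (n + 1))) :=
              W4 u u (T n (x n)) (T (n + 1) (x (n + 1))) (α (n + 1)) (hα01 (n + 1))
          _ = α (n + 1) * dist (T n (x n)) (T (n + 1) (x (n + 1))) := by rw [dist_self]; ring
          _ ≤ (((n:ℝ) + 1) / ((n:ℝ) + 3)) * (6 * M / ((n:ℝ) + 2) + (1 / (((n:ℝ) + 2) ^ 2)) * (2 * M)) := by
              rw [hαn1]
              exact mul_le_mul_of_nonneg_left hab (by positivity)
      have key : (2 / (((n:ℝ) + 2) * ((n:ℝ) + 3))) * (2 * M) +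
          (((n:ℝ) + 1) / ((n:ℝ) + 3)) * (6 * M / ((n:ℝ) + 2) + (1 / (((n:ℝ) + 2) ^ 2)) * (2 * M)) ≤
          6 * M / ((n:ℝ) + 3) := by
        have hdiff : 6 * M / ((n:ℝ) + 3) -
            ((2 / (((n:ℝ) + 2) * ((n:ℝ) + 3))) * (2 * M) +
            (((n:ℝ) + 1) / ((n:ℝ) + 3)) * (6 * M / ((n:ℝ) + 2) + (1 / (((n:ℝ) + 2) ^ 2)) * (2 * M))) =
            2 * M / ((((n:ℝ) + 2) ^ 2) * ((n:ℝ) + 3)) := by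
          field_simp
          ring
        have hnn : (0:ℝ) ≤ 2 * M / ((((n:ℝ) + 2) ^ 2) * ((n:ℝ) + 3)) := by positivity
        linarith
      have hcast : ((n + 1 : ℕ):ℝ) + 2 = (n:ℝ) + 3 := by push_cast; ring
      rw [hcast]
      calc dist (x (n + 1)) (x (n + 1 + 1))
          ≤ dist (x (n + 1)) (W u (T n (x n)) (α (n + 1))) +
            dist (W u (T n (x n)) (α (n + 1))) (x (n + 2)) := dist_triangle _ _ _
        _ ≤ (2 / (((n:ℝ) + 2) * ((n:ℝ) + 3))) * (2 * M) +
            (((n:ℝ) + 1) / ((n:ℝ) + 3)) * (6 * M / ((n:ℝ) + 2) + (1 / (((n:ℝ) + 2) ^ 2)) * (2 * M)) :=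
              add_le_add term1 term2
        _ ≤ 6 * M / ((n:ℝ) + 3) := key
  intro m n
  have hb : dist (x n) (T n (x n)) ≤ 10 * M / ((n:ℝ) + 2) := by
    calc dist (x n) (T n (x n))
        ≤ dist (x n) (x (n + 1)) + dist (x (n + 1)) (T n (x n)) := dist_triangle _ _ _
      _ ≤ 6 * M / ((n:ℝ) + 2) + 4 * M / ((n:ℝ) + 2) := add_le_add (hC n) (hB n)
      _ = 10 * M / ((n:ℝ) + 2) := by ring
  refine ⟨hb, ?_⟩
  have hratio' : |γ n - γ m| / γ n ≤ 1 := by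
    rw [div_le_one (lt_of_lt_of_le one_pos (hγ1 n))]
    have h1 := hγ1 n
    have h2 := hγ2 n
    have h3 := hγ1 m
    have h4 := hγ2 m
    rw [abs_le]
    constructor <;> linarith
  calc dist (x n) (T m (x n))
      ≤ dist (x n) (T n (x n)) + dist (T n (x n)) (T m (x n)) := dist_triangle _ _ _
    _ ≤ dist (x n) (T n (x n)) + (|γ n - γ m| / γ n) * dist (x n) (T n (x n)) := by
        linarith [hC1 (x n) n m]
    _ ≤ dist (x n) (T n (x n)) + 1 * dist (x n) (T n (x n)) := by
        have := mul_le_mul_of_nonneg_right hratio' (dist_nonneg (x := x n) (y := T n (x n)))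
        linarith
    _ = 2 * dist (x n) (T n (x n)) := by ring
    _ ≤ 2 * (10 * M / ((n:ℝ) + 2)) := by linarith
    _ = 20 * M / ((n:ℝ) + 2) := by ring
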